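/- For all real σ > 1 and all real t, the logarithmic derivative of the Riemann zeta function satisfies |ζ'(σ + it)/ζ(σ + it)| < 1/(σ − 1) − 1/(2σ²). -/

import Mathlib

open Set Real

lemma hasDerivAt_f (σ : ℝ) {x : ℝ} (hx : 0 < x) :
    HasDerivAt (fun y : ℝ => y ^ (-σ)) (-σ * x ^ (-σ - 1)) x :=
  Real.hasDerivAt_rpow_const (Or.inl hx.ne')

lemma convexOn_f {σ : ℝ} (hσ : 0 < σ) :
    ConvexOn ℝ (Ici (1:ℝ)) (fun y : ℝ => y ^ (-σ)) := by
  have hd : ∀ x ∈ interior (Ici (1:ℝ)), deriv (fun y : ℝ => y ^ (-σ)) x = -σ * x ^ (-σ-1) := by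
    intro x hx
    rw [interior_Ici] at hx
    exact (hasDerivAt_f σ (lt_trans one_pos hx)).deriv
  refine convexOn_of_deriv2_nonneg (convex_Ici 1) ?_ ?_ ?_ ?_
  · intro x hx
    exact ((hasDerivAt_f σ (lt_of_lt_of_le one_pos hx)).continuousAt).continuousWithinAt
  · intro x hx
    rw [interior_Ici] at hx
    exact ((hasDerivAt_f σ (lt_trans one_pos hx)).differentiableAt).differentiableWithinAt
  · intro x hx
    rw [interior_Ici] at hx
    have hx0 : 0 < x := lt_trans one_pos hx
    have : HasDerivAt (deriv (fun y : ℝ => y ^ (-σ))) (-σ * ((-σ-1) * x ^ (-σ-1-1))) x := by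
      have h1 : HasDerivAt (fun y : ℝ => -σ * y ^ (-σ-1)) (-σ * ((-σ-1) * x ^ (-σ-1-1))) x :=
        (Real.hasDerivAt_rpow_const (Or.inl hx0.ne')).const_mul (-σ)
      refine h1.congr_of_eventuallyEq ?_
      filter_upwards [eventually_gt_nhds hx0] with y hy
      exact (hasDerivAt_f σ hy).deriv
    exact this.differentiableAt.differentiableWithinAt
  · intro x hx
    rw [interior_Ici] at hx
    have hx0 : 0 < x := lt_trans one_pos hx
    have h1 : HasDerivAt (fun y : ℝ => -σ * y ^ (-σ-1)) (-σ * ((-σ-1) * x ^ (-σ-1-1))) x :=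
      (Real.hasDerivAt_rpow_const (Or.inl hx0.ne')).const_mul (-σ)
    have h2 : HasDerivAt (deriv (fun y : ℝ => y ^ (-σ))) (-σ * ((-σ-1) * x ^ (-σ-1-1))) x := by
      refine h1.congr_of_eventuallyEq ?_
      filter_upwards [eventually_gt_nhds hx0] with y hy
      exact (hasDerivAt_f σ hy).deriv
    have : deriv^[2] (fun y : ℝ => y ^ (-σ)) x = -σ * ((-σ-1) * x ^ (-σ-1-1)) := by
      simp only [Function.iterate_succ, Function.iterate_zero, Function.comp_apply, id]
      exact h2.deriv
    rw [this]
    have h3 : (0:ℝ) < x ^ (-σ-1-1) := Real.rpow_pos_of_pos hx0 _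
    nlinarith [mul_pos (mul_pos hσ (by linarith : (0:ℝ) < σ+1)) h3]

lemma trapezoid {σ : ℝ} (hσ : 0 < σ) {a : ℝ} (ha : 1 ≤ a) :
    ∫ x in a..(a+1), x ^ (-σ) ≤ (a ^ (-σ) + (a+1) ^ (-σ))/2 := by
  set A := a ^ (-σ) with hA
  set B := (a+1) ^ (-σ) with hB
  have key : ∀ x ∈ Icc a (a+1), x ^ (-σ) ≤ ((a+1)*A - a*B) + (B-A)*x := by
    intro x hx
    have h := (convexOn_f hσ).2 (mem_Ici.2 ha) (mem_Ici.2 (by linarith : (1:ℝ) ≤ a+1))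
      (sub_nonneg.2 hx.2) (sub_nonneg.2 hx.1) (by ring)
    simp only [smul_eq_mul] at h
    calc x ^ (-σ) = ((a+1-x) * a + (x-a)*(a+1)) ^ (-σ) := by ring_nf
      _ ≤ (a+1-x) * A + (x-a) * B := h
      _ = ((a+1)*A - a*B) + (B-A)*x := by ring
  have hint : ∫ x in a..(a+1), (((a+1)*A - a*B) + (B-A)*x) = (A+B)/2 := by
    have h1 : IntervalIntegrable (fun x : ℝ => (B-A)*x) MeasureTheory.volume a (a+1) :=
      (continuous_const.mul continuous_id').intervalIntegrable _ _
    rw [intervalIntegral.integral_add (intervalIntegrable_const) h1,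
      intervalIntegral.integral_const, intervalIntegral.integral_const_mul, integral_id]
    simp only [smul_eq_mul]
    ring
  calc ∫ x in a..(a+1), x ^ (-σ)
      ≤ ∫ x in a..(a+1), (((a+1)*A - a*B) + (B-A)*x) := by
        refine intervalIntegral.integral_mono_on (by linarith) ?_ ?_ ?_
        · apply ContinuousOn.intervalIntegrable
          apply ContinuousOn.rpow_const continuousOn_id
          intro x hx
          rw [uIcc_of_le (by linarith)] at hx
          refine Or.inl ?_
          simp only [id]
          intro h
          rw [h] at hx
          linarith [hx.1]
        · exact (intervalIntegrable_const).add
            ((continuous_const.mul continuous_id').intervalIntegrable _ _)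
        · exact key
    _ = (A+B)/2 := hint

lemma intble_f (σ : ℝ) {a b : ℝ} (ha : 0 < a) (hb : 0 < b) :
    IntervalIntegrable (fun x : ℝ => x ^ (-σ)) MeasureTheory.volume a b := by
  apply ContinuousOn.intervalIntegrable
  apply ContinuousOn.rpow_const continuousOn_id
  intro x hx
  refine Or.inl ?_
  simp only [id]
  rcases le_total a b with h | h
  · rw [uIcc_of_le h] at hx; intro h0; rw [h0] at hx; linarith [hx.1]
  · rw [uIcc_of_ge h] at hx; intro h0; rw [h0] at hx; linarith [hx.1]

lemma sum_trap {σ : ℝ} (hσ : 1 < σ) : ∀ N : ℕ,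
    (∫ x in (1:ℝ)..((N:ℝ)+1), x ^ (-σ)) + (1 + ((N:ℝ)+1) ^ (-σ))/2
      ≤ ∑ i ∈ Finset.range (N+1), ((i:ℝ)+1) ^ (-σ) := by
  have hσ0 : 0 < σ := by linarith
  intro N
  induction N with
  | zero =>
      simp only [Nat.cast_zero, zero_add, intervalIntegral.integral_same,
        Finset.range_one, Finset.sum_singleton]
      rw [Real.one_rpow]
      norm_num
  | succ n ih =>
      have hsplit : (∫ x in (1:ℝ)..((n:ℝ)+1+1), x ^ (-σ))
          = (∫ x in (1:ℝ)..((n:ℝ)+1), x ^ (-σ)) + ∫ x in ((n:ℝ)+1)..((n:ℝ)+1+1), x ^ (-σ) :=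
        (intervalIntegral.integral_add_adjacent_intervals
          (intble_f σ one_pos (by positivity)) (intble_f σ (by positivity) (by positivity))).symm
      have htrap := trapezoid hσ0 (by linarith [Nat.cast_nonneg (α := ℝ) n] : (1:ℝ) ≤ (n:ℝ)+1)
      rw [Finset.sum_range_succ]
      push_cast
      push_cast at ih htrap hsplit
      rw [hsplit]
      linarith

lemma zeta_sum_lower {σ : ℝ} (hσ : 1 < σ) :
    1/(σ-1) + 1/2 ≤ ∑' n : ℕ, (n:ℝ) ^ (-σ) := by
  have hsum : Summable (fun n : ℕ => (n:ℝ) ^ (-σ)) :=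
    Real.summable_nat_rpow.2 (by linarith)
  -- partial sums bound
  have hpart : ∀ N : ℕ, (1 - ((N:ℝ)+1)^(1-σ))/(σ-1) + 1/2 ≤ ∑' n : ℕ, (n:ℝ) ^ (-σ) := by
    intro N
    have h1 : ∑ n ∈ Finset.range (N+2), (n:ℝ) ^ (-σ)
        = ∑ i ∈ Finset.range (N+1), ((i:ℝ)+1) ^ (-σ) := by
      rw [Finset.sum_range_succ']
      have h0 : ((0:ℕ):ℝ) ^ (-σ) = 0 := by
        rw [Nat.cast_zero, Real.zero_rpow (by linarith : -σ ≠ 0)]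
      rw [h0, add_zero]
      exact Finset.sum_congr rfl fun i _ => by push_cast; ring_nf
    have h2 := sum_trap hσ N
    have h3 : ∑ n ∈ Finset.range (N+2), (n:ℝ) ^ (-σ) ≤ ∑' n : ℕ, (n:ℝ) ^ (-σ) :=
      Summable.sum_le_tsum _ (fun i _ => Real.rpow_nonneg (Nat.cast_nonneg i) _) hsum
    have hint : (∫ x in (1:ℝ)..((N:ℝ)+1), x ^ (-σ)) = (1 - ((N:ℝ)+1)^(1-σ))/(σ-1) := by
      rw [integral_rpow (Or.inr ⟨by intro h; linarith, by
        intro h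
        rw [uIcc_of_le (by linarith [Nat.cast_nonneg (α := ℝ) N] : (1:ℝ) ≤ (N:ℝ)+1)] at h
        linarith [h.1]⟩)]
      rw [Real.one_rpow]
      have : -σ + 1 = 1 - σ := by ring
      rw [this]
      rw [div_eq_div_iff (by linarith) (by linarith)]
      ring
    have hm : ((N:ℝ)+1) ^ (-σ) ≥ 0 := Real.rpow_nonneg (by positivity) _
    rw [h1] at h3
    rw [hint] at h2
    linarith
  -- limit
  have hlim : Filter.Tendsto (fun N : ℕ => (1 - ((N:ℝ)+1)^(1-σ))/(σ-1) + 1/2)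
      Filter.atTop (nhds (1/(σ-1) + 1/2)) := by
    have h0 : Filter.Tendsto (fun N : ℕ => ((N:ℝ)+1)^(1-σ)) Filter.atTop (nhds 0) := by
      have ha : Filter.Tendsto (fun N : ℕ => (N:ℝ)+1) Filter.atTop Filter.atTop :=
        Filter.tendsto_atTop_add_const_right _ 1 tendsto_natCast_atTop_atTop
      have hb : Filter.Tendsto (fun x : ℝ => x ^ (1-σ)) Filter.atTop (nhds 0) := by
        have := tendsto_rpow_neg_atTop (by linarith : (0:ℝ) < σ - 1)
        convert this using 2
        ring
      exact hb.comp ha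
    have h : Filter.Tendsto (fun N : ℕ => (1 - ((N:ℝ)+1)^(1-σ))/(σ-1)) Filter.atTop
        (nhds ((1 - 0)/(σ-1))) := (Filter.Tendsto.const_sub _ h0).div_const _
    simp only [sub_zero] at h
    exact h.add_const (1/2)
  exact le_of_tendsto hlim (Filter.Eventually.of_forall hpart)

noncomputable def gg (σ : ℝ) (x : ℝ) : ℝ := Real.log x * x ^ (-σ)

lemma hasDerivAt_g (σ : ℝ) {x : ℝ} (hx : 0 < x) :
    HasDerivAt (gg σ) (x ^ (-σ-1) * (1 - σ * Real.log x)) x := by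
  have h := (Real.hasDerivAt_log hx.ne').mul (hasDerivAt_f σ hx)
  have h' : HasDerivAt (gg σ) (x⁻¹ * x ^ (-σ) + Real.log x * (-σ * x ^ (-σ - 1))) x := h
  convert h' using 1
  rw [show (-σ-1) = -σ - 1 from rfl, Real.rpow_sub hx, Real.rpow_one]
  field_simp
  ring

lemma contOn_g (σ : ℝ) {s : Set ℝ} (hs : ∀ x ∈ s, 0 < x) : ContinuousOn (gg σ) s :=
  fun x hx => ((hasDerivAt_g σ (hs x hx)).continuousAt).continuousWithinAt

lemma intble_g (σ : ℝ) {a b : ℝ} (ha : 0 < a) (hab : a ≤ b) :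
    IntervalIntegrable (gg σ) MeasureTheory.volume a b := by
  apply ContinuousOn.intervalIntegrable
  apply contOn_g
  intro x hx
  rw [uIcc_of_le hab] at hx
  linarith [hx.1]

lemma antitoneOn_g {σ : ℝ} (hσ : 0 < σ) {c : ℝ} (hc0 : 0 < c) (hc : 1 ≤ σ * Real.log c) :
    AntitoneOn (gg σ) (Ici c) := by
  refine antitoneOn_of_deriv_nonpos (convex_Ici c) (contOn_g σ fun x hx => lt_of_lt_of_le hc0 hx) ?_ ?_
  · intro x hx
    rw [interior_Ici] at hx
    exact (hasDerivAt_g σ (lt_trans hc0 hx)).differentiableAt.differentiableWithinAt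
  · intro x hx
    rw [interior_Ici] at hx
    have hx0 : 0 < x := lt_trans hc0 hx
    rw [(hasDerivAt_g σ hx0).deriv]
    have hlog : Real.log c ≤ Real.log x := Real.log_le_log hc0 (le_of_lt hx)
    have h1 : 1 ≤ σ * Real.log x := le_trans hc (by nlinarith)
    have h2 : (0:ℝ) ≤ x ^ (-σ-1) := Real.rpow_nonneg hx0.le _
    nlinarith


lemma monotoneOn_g {σ : ℝ} (hσ : 0 < σ) {a c : ℝ} (ha : 0 < a) (hc : σ * Real.log c ≤ 1) :
    MonotoneOn (gg σ) (Icc a c) := by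
  refine monotoneOn_of_deriv_nonneg (convex_Icc a c)
    (contOn_g σ fun x hx => lt_of_lt_of_le ha hx.1) ?_ ?_
  · intro x hx
    rw [interior_Icc] at hx
    exact (hasDerivAt_g σ (lt_trans ha hx.1)).differentiableAt.differentiableWithinAt
  · intro x hx
    rw [interior_Icc] at hx
    have hx0 : 0 < x := lt_trans ha hx.1
    rw [(hasDerivAt_g σ hx0).deriv]
    have hlog : Real.log x ≤ Real.log c := Real.log_le_log hx0 hx.2.le
    have h1 : σ * Real.log x ≤ 1 := le_trans (by nlinarith) hc
    have h2 : (0:ℝ) ≤ x ^ (-σ-1) := Real.rpow_nonneg hx0.le _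
    nlinarith

lemma g_le {σ : ℝ} (hσ : 0 < σ) {x : ℝ} (hx : 0 < x) :
    gg σ x ≤ 1 / (Real.exp 1 * σ) := by
  have hy : (0:ℝ) < x ^ σ := Real.rpow_pos_of_pos hx _
  have hlog : σ * Real.log x = Real.log (x ^ σ) := (Real.log_rpow hx σ).symm
  have h1 : Real.log (x ^ σ) ≤ x ^ σ / Real.exp 1 := by
    have := Real.add_one_le_exp (Real.log (x ^ σ) - 1)
    rw [Real.exp_sub, Real.exp_log hy] at this
    linarith
  have h2 : Real.log x ≤ x ^ σ / (Real.exp 1 * σ) := by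
    have : σ * Real.log x ≤ x ^ σ / Real.exp 1 := hlog ▸ h1
    rw [le_div_iff₀ (by positivity)]
    have h' := (le_div_iff₀ (Real.exp_pos 1)).mp this
    calc Real.log x * (Real.exp 1 * σ) = σ * Real.log x * Real.exp 1 := by ring
      _ ≤ x ^ σ := h'
  have h3 : gg σ x ≤ (x ^ σ / (Real.exp 1 * σ)) * x ^ (-σ) :=
    mul_le_mul_of_nonneg_right h2 (Real.rpow_nonneg hx.le _)
  calc gg σ x ≤ (x ^ σ / (Real.exp 1 * σ)) * x ^ (-σ) := h3
    _ = (x ^ σ * x ^ (-σ)) / (Real.exp 1 * σ) := by ring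
    _ = 1 / (Real.exp 1 * σ) := by
        rw [← Real.rpow_add hx]
        simp

noncomputable def FF (σ : ℝ) (x : ℝ) : ℝ :=
  -(((σ-1) * Real.log x + 1) * x ^ (1-σ)) / (σ-1)^2

lemma hasDerivAt_F {σ : ℝ} (hσ : 1 < σ) {x : ℝ} (hx : 0 < x) :
    HasDerivAt (FF σ) (gg σ x) x := by
  have h1 : HasDerivAt (fun y : ℝ => (σ-1) * Real.log y + 1) ((σ-1) / x) x := by
    simpa [div_eq_mul_inv] using ((Real.hasDerivAt_log hx.ne').const_mul (σ-1)).add_const 1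
  have h2 : HasDerivAt (fun y : ℝ => y ^ (1-σ)) ((1-σ) * x ^ (1-σ-1)) x :=
    Real.hasDerivAt_rpow_const (Or.inl hx.ne')
  rw [show (1-σ-1) = -σ from by ring] at h2
  have h3 := (h1.mul h2).div_const ((σ-1)^2)
  have h4 := h3.neg
  have h5 : HasDerivAt (fun y => -(((σ-1) * Real.log y + 1) * y ^ (1-σ) / (σ-1)^2))
      (-((((σ-1)/x) * x ^ (1-σ) + ((σ-1) * Real.log x + 1) * ((1-σ) * x ^ (-σ))) / (σ-1)^2)) x := h4
  have h6 : HasDerivAt (FF σ)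
      (-((((σ-1)/x) * x ^ (1-σ) + ((σ-1) * Real.log x + 1) * ((1-σ) * x ^ (-σ))) / (σ-1)^2)) x := by
    refine h5.congr_of_eventuallyEq (Filter.Eventually.of_forall fun y => ?_)
    unfold FF
    ring
  convert h6 using 1
  rw [show (1-σ) = -σ + 1 from by ring, Real.rpow_add hx, Real.rpow_one]
  have hne : (σ-1) ≠ 0 := by intro h; linarith [h]
  unfold gg
  field_simp
  ring

lemma integral_g {σ : ℝ} (hσ : 1 < σ) {a b : ℝ} (ha : 0 < a) (hab : a ≤ b) :
    ∫ x in a..b, gg σ x = FF σ b - FF σ a := by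
  refine intervalIntegral.integral_eq_sub_of_hasDerivAt (fun x hx => ?_) (intble_g σ ha hab)
  rw [uIcc_of_le hab] at hx
  exact hasDerivAt_F hσ (lt_of_lt_of_le ha hx.1)

lemma log_three_gt_one : 1 < Real.log 3 := by
  rw [Real.lt_log_iff_exp_lt (by norm_num : (0:ℝ) < 3)]
  exact lt_trans Real.exp_one_lt_d9 (by norm_num)

lemma g_nat_nonneg (σ : ℝ) (n : ℕ) : 0 ≤ gg σ (n:ℝ) := by
  cases n with
  | zero => simp [gg]
  | succ m =>
      apply mul_nonneg
      · apply Real.log_nonneg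
        push_cast
        linarith [Nat.cast_nonneg (α := ℝ) m]
      · exact Real.rpow_nonneg (Nat.cast_nonneg _) _

lemma Q_bound {σ : ℝ} (hσ : 1 < σ) :
    ∑' n : ℕ, gg σ (n:ℝ) ≤ 1/(σ-1)^2 + 1/(Real.exp 1 * σ) := by
  have hσ0 : (0:ℝ) < σ := by linarith
  have h13 : 1 ≤ σ * Real.log 3 := by nlinarith [log_three_gt_one]
  -- min bound on [2,3]
  have hmin : ∀ x ∈ Icc (2:ℝ) 3, min (gg σ 2) (gg σ 3) ≤ gg σ x := by
    intro x hx
    by_cases h : 1 ≤ σ * Real.log x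
    · refine le_trans (min_le_right _ _) ?_
      exact antitoneOn_g hσ0 (by linarith [hx.1] : (0:ℝ) < x) h
        (mem_Ici.2 le_rfl) (mem_Ici.2 hx.2) hx.2
    · push_neg at h
      refine le_trans (min_le_left _ _) ?_
      exact monotoneOn_g hσ0 (by norm_num : (0:ℝ) < 2) h.le
        ⟨le_rfl, hx.1⟩ ⟨hx.1, le_rfl⟩ hx.1
  have hconst : min (gg σ 2) (gg σ 3) ≤ ∫ x in (2:ℝ)..3, gg σ x := by
    have h1 : ∫ _x in (2:ℝ)..3, min (gg σ 2) (gg σ 3) = min (gg σ 2) (gg σ 3) := by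
      simp
      ring
    rw [← h1]
    refine intervalIntegral.integral_mono_on (by norm_num) intervalIntegrable_const
      (intble_g σ (by norm_num) (by norm_num)) hmin
  have hint23 : ∫ x in (2:ℝ)..3, gg σ x = FF σ 3 - FF σ 2 :=
    integral_g hσ (by norm_num) (by norm_num)
  have h23 : gg σ 2 + gg σ 3 ≤ 1/(Real.exp 1 * σ) + (FF σ 3 - FF σ 2) := by
    have hmax : max (gg σ 2) (gg σ 3) ≤ 1/(Real.exp 1 * σ) :=
      max_le (g_le hσ0 (by norm_num)) (g_le hσ0 (by norm_num))
    have := min_add_max (gg σ 2) (gg σ 3)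
    rw [hint23] at hconst
    linarith
  have hF1 : FF σ 1 = -(1/(σ-1)^2) := by
    unfold FF
    rw [Real.log_one, Real.one_rpow]
    ring
  have hF12 : FF σ 1 ≤ FF σ 2 := by
    have h0 : (0:ℝ) ≤ ∫ x in (1:ℝ)..2, gg σ x := by
      refine intervalIntegral.integral_nonneg (by norm_num) fun x hx => ?_
      exact mul_nonneg (Real.log_nonneg hx.1) (Real.rpow_nonneg (by linarith [hx.1]) _)
    rw [integral_g hσ one_pos (by norm_num)] at h0
    linarith
  have hFle : ∀ x : ℝ, 1 ≤ x → FF σ x ≤ 0 := by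
    intro x hx
    unfold FF
    rw [neg_div]
    have h1 : (0:ℝ) ≤ (σ-1) * Real.log x + 1 := by
      nlinarith [Real.log_nonneg hx]
    have h2 : (0:ℝ) ≤ x ^ (1-σ) := Real.rpow_nonneg (by linarith) _
    have h3 : (0:ℝ) ≤ (σ-1)^2 := sq_nonneg _
    simp only [neg_nonpos]
    positivity
  -- partial sums
  refine Real.tsum_le_of_sum_range_le (g_nat_nonneg σ) fun N => ?_
  have step1 : ∑ n ∈ Finset.range N, gg σ (n:ℝ) ≤ ∑ n ∈ Finset.range (4+N), gg σ (n:ℝ) :=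
    Finset.sum_le_sum_of_subset_of_nonneg (Finset.range_subset_range.2 (by omega))
      (fun i _ _ => g_nat_nonneg σ i)
  have step2 : ∑ n ∈ Finset.range (4+N), gg σ (n:ℝ)
      = (gg σ 2 + gg σ 3) + ∑ i ∈ Finset.range N, gg σ ((3:ℝ) + ((i+1:ℕ):ℝ)) := by
    rw [Finset.sum_range_add]
    congr 1
    · simp only [Finset.sum_range_succ, Finset.sum_range_zero]
      norm_num [gg]
    · refine Finset.sum_congr rfl fun i _ => ?_
      congr 1
      push_cast
      ring
  have step3 : ∑ i ∈ Finset.range N, gg σ ((3:ℝ) + ((i+1:ℕ):ℝ))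
      ≤ ∫ x in (3:ℝ)..(3+N), gg σ x := by
    refine AntitoneOn.sum_le_integral ?_
    exact (antitoneOn_g hσ0 (by norm_num) h13).mono
      (fun x hx => mem_Ici.2 hx.1)
  have step4 : ∫ x in (3:ℝ)..(3+N), gg σ x = FF σ (3+N) - FF σ 3 :=
    integral_g hσ (by norm_num) (by linarith [Nat.cast_nonneg (α := ℝ) N])
  have hF3N : FF σ ((3:ℝ)+N) ≤ 0 := hFle _ (by linarith [Nat.cast_nonneg (α := ℝ) N])
  calc ∑ n ∈ Finset.range N, gg σ (n:ℝ)
      ≤ (gg σ 2 + gg σ 3) + ∑ i ∈ Finset.range N, gg σ ((3:ℝ) + ((i+1:ℕ):ℝ)) := by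
        rw [← step2]; exact step1
    _ ≤ (1/(Real.exp 1 * σ) + (FF σ 3 - FF σ 2)) + (FF σ (3+N) - FF σ 3) := by
        rw [← step4]; exact add_le_add h23 step3
    _ ≤ 1/(σ-1)^2 + 1/(Real.exp 1 * σ) := by
        have := hF1
        linarith

open scoped LSeries.notation ArithmeticFunction.vonMangoldt
open LSeries Complex

/-- Delange's bound: for `σ > 1` and any real `t`,
`|ζ'(σ + it)/ζ(σ + it)| < 1/(σ − 1) − 1/(2σ²)`. -/
theorem zeta_log_deriv_bound (σ t : ℝ) (hσ : 1 < σ) :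
    ‖deriv riemannZeta (σ + t * Complex.I) /
        riemannZeta (σ + t * Complex.I)‖ < 1 / (σ - 1) - 1 / (2 * σ ^ 2) := by
  set s : ℂ := σ + t * Complex.I with hs_def
  have hs : 1 < s.re := by simpa [hs_def] using hσ
  have hσre : 1 < (σ:ℂ).re := by simpa using hσ
  have hΛs : LSeriesSummable ↗Λ s := ArithmeticFunction.LSeriesSummable_vonMangoldt hs
  have hΛσ : LSeriesSummable ↗Λ (σ:ℂ) := ArithmeticFunction.LSeriesSummable_vonMangoldt hσre
  -- real quantities
  set Z : ℝ := ∑' n : ℕ, (n:ℝ) ^ (-σ) with hZ_def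
  set Q : ℝ := ∑' n : ℕ, gg σ (n:ℝ) with hQ_def
  set q : ℕ → ℝ := fun n => if n = 0 then 0 else Λ n * (n:ℝ) ^ (-σ) with hq_def
  have hre : s.re = σ := by simp [hs_def]
  -- norm of terms
  have hterm_norm : ∀ n : ℕ, ‖term ↗Λ s n‖ = q n := by
    intro n
    rw [norm_term_eq, hre]
    rcases eq_or_ne n 0 with rfl | hn
    · simp [hq_def]
    · simp only [hq_def, if_neg hn]
      rw [Complex.norm_real, Real.norm_eq_abs,
        _root_.abs_of_nonneg ArithmeticFunction.vonMangoldt_nonneg,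
        Real.rpow_neg (Nat.cast_nonneg n), div_eq_mul_inv]
  have hq_sum : Summable q := by
    have := hΛs.norm
    rwa [show (fun n => ‖term ↗Λ s n‖) = q from funext hterm_norm] at this
  -- step 1 : bound by tsum of q
  have h1 : ‖deriv riemannZeta s / riemannZeta s‖ ≤ ∑' n, q n := by
    have hLd := ArithmeticFunction.LSeries_vonMangoldt_eq_deriv_riemannZeta_div hs
    have heq : deriv riemannZeta s / riemannZeta s = -(L ↗Λ s) := by rw [hLd]; ring
    rw [heq, norm_neg]
    calc ‖L ↗Λ s‖ = ‖L ↗Λ s‖ := rfl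
      _ ≤ ∑' n, ‖term ↗Λ s n‖ := norm_tsum_le_tsum_norm hΛs.norm
      _ = ∑' n, q n := by rw [show (fun n => ‖term ↗Λ s n‖) = q from funext hterm_norm]
  -- step 2 : value at σ
  have hterm_σ : ∀ n : ℕ, term ↗Λ (σ:ℂ) n = ((q n : ℝ) : ℂ) := by
    intro n
    rcases eq_or_ne n 0 with rfl | hn
    · simp [hq_def, LSeries.term_zero]
    · rw [LSeries.term_of_ne_zero hn]
      simp only [hq_def, if_neg hn]
      rw [show ((n:ℂ) : ℂ) = (((n:ℝ)):ℂ) from by push_cast; rfl,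
        ← Complex.ofReal_cpow (Nat.cast_nonneg n) σ]
      rw [Real.rpow_neg (Nat.cast_nonneg n), ← div_eq_mul_inv, Complex.ofReal_div]
  have hLσ : L ↗Λ (σ:ℂ) = (((∑' n, q n : ℝ)) : ℂ) := by
    rw [show L ↗Λ (σ:ℂ) = ∑' n, term ↗Λ (σ:ℂ) n from rfl, Complex.ofReal_tsum]
    exact tsum_congr hterm_σ
  -- step 3 : zeta at σ
  have hζσ : riemannZeta (σ:ℂ) = ((Z : ℝ) : ℂ) := by
    rw [zeta_eq_tsum_one_div_nat_cpow hσre, hZ_def, Complex.ofReal_tsum]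
    refine tsum_congr fun n => ?_
    rcases eq_or_ne n 0 with rfl | hn
    · have hσ0 : (σ:ℂ) ≠ 0 := by
        simp only [ne_eq, Complex.ofReal_eq_zero]
        linarith
      simp [Complex.zero_cpow hσ0, Real.zero_rpow (show -σ ≠ 0 from by linarith)]
    · rw [show ((n:ℂ) : ℂ) = (((n:ℝ)):ℂ) from by push_cast; rfl,
        ← Complex.ofReal_cpow (Nat.cast_nonneg n) σ,
        Real.rpow_neg (Nat.cast_nonneg n)]
      rw [← Complex.ofReal_one, ← Complex.ofReal_div, one_div]
  -- step 4 : derivative of zeta at σ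
  have habs : abscissaOfAbsConv 1 < (σ:ℂ).re := by
    rw [LSeries.abscissaOfAbsConv_one]
    exact_mod_cast hσre
  have hζ' : deriv riemannZeta (σ:ℂ) = -((Q : ℝ) : ℂ) := by
    have hev : (LSeries 1) =ᶠ[nhds (σ:ℂ)] riemannZeta :=
      Filter.eventuallyEq_iff_exists_mem.mpr ⟨{z | 1 < z.re},
        (isOpen_lt continuous_const continuous_re).mem_nhds hσre,
        fun z hz => LSeries_one_eq_riemannZeta hz⟩
    rw [← hev.deriv_eq, LSeries_deriv habs]
    congr 1
    rw [show L (logMul 1) (σ:ℂ) = ∑' n, term (logMul 1) (σ:ℂ) n from rfl,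
      hQ_def, Complex.ofReal_tsum]
    refine tsum_congr fun n => ?_
    rcases eq_or_ne n 0 with rfl | hn
    · simp [gg]
    · rw [LSeries.term_of_ne_zero hn]
      simp only [logMul, Pi.one_apply, mul_one]
      rw [show ((n:ℂ) : ℂ) = (((n:ℝ)):ℂ) from by push_cast; rfl,
        ← Complex.ofReal_cpow (Nat.cast_nonneg n) σ,
        ← Complex.ofReal_log (Nat.cast_nonneg n)]
      rw [← Complex.ofReal_div]
      congr 1
      rw [gg, Real.rpow_neg (Nat.cast_nonneg n), div_eq_mul_inv]
  -- step 5 : P = Q / Z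
  have hzne : riemannZeta (σ:ℂ) ≠ 0 := riemannZeta_ne_zero_of_one_lt_re hσre
  have hLσ' : L ↗Λ (σ:ℂ) = -deriv riemannZeta (σ:ℂ) / riemannZeta (σ:ℂ) :=
    ArithmeticFunction.LSeries_vonMangoldt_eq_deriv_riemannZeta_div hσre
  have hPQZ : (∑' n, q n) = Q / Z := by
    have : (((∑' n, q n : ℝ)) : ℂ) = (((Q / Z : ℝ)) : ℂ) := by
      rw [← hLσ, hLσ', hζ', hζσ, neg_neg, Complex.ofReal_div]
    exact_mod_cast this
  -- step 6 : real estimates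
  have hZB : 1/(σ-1) + 1/2 ≤ Z := zeta_sum_lower hσ
  have hQB : Q ≤ 1/(σ-1)^2 + 1/(Real.exp 1 * σ) := Q_bound hσ
  have hQ0 : 0 ≤ Q := tsum_nonneg (fun n => g_nat_nonneg σ n)
  have hB0 : (0:ℝ) < 1/(σ-1) + 1/2 := by
    have : (0:ℝ) < 1/(σ-1) := one_div_pos.mpr (by linarith)
    linarith
  have hZ0 : (0:ℝ) < Z := lt_of_lt_of_le hB0 hZB
  have key : 1/(Real.exp 1 * σ) < (2*σ+1)/(4*σ^2) := by
    rw [div_lt_div_iff₀ (by positivity) (by positivity)]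
    nlinarith [Real.exp_one_gt_d9, sq_nonneg σ]
  have hRB : (1/(σ-1) - 1/(2*σ^2)) * (1/(σ-1) + 1/2)
      = 1/(σ-1)^2 + (2*σ+1)/(4*σ^2) := by
    have h1 : σ - 1 ≠ 0 := by linarith
    have h2 : σ ≠ 0 := by linarith
    field_simp
    ring
  have hQRB : Q < (1/(σ-1) - 1/(2*σ^2)) * (1/(σ-1) + 1/2) := by
    rw [hRB]; linarith
  have hfinal : Q / Z < 1/(σ-1) - 1/(2*σ^2) := by
    have h2 : Q / Z ≤ Q / (1/(σ-1) + 1/2) := div_le_div_of_nonneg_left hQ0 hB0 hZB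
    have h3 : Q / (1/(σ-1) + 1/2) < 1/(σ-1) - 1/(2*σ^2) :=
      (div_lt_iff₀ hB0).mpr (by linarith [hQRB])
    linarith
  calc ‖deriv riemannZeta s / riemannZeta s‖ ≤ ∑' n, q n := h1
    _ = Q / Z := hPQZ
    _ < 1/(σ-1) - 1/(2*σ^2) := hfinal
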